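/- arXiv:1701.02286 — 2 statements merged into one kernel-verified Lean document; each statement's English description precedes it below -/
import Mathlib

section
/- For every real number x ≥ 1, ∑_{n ≤ x} (λ_5 ⋆ 𝟏)(n) = ∑_{d ≤ √x} μ(d) ⌊ (x/d²)^{1/5} ⌋, where μ is the Möbius function. -/
instance : Fact (Nat.Prime 5) := ⟨by norm_num⟩

/-- `λ_5(n) = (τ(n)/5)` as a real number. -/
noncomputable def lam5 (n : ℕ) : ℝ :=
  (legendreSym 5 (n.divisors.card : ℤ) : ℝ)

open Finset

open scoped Classical in
noncomputable def Lf : ArithmeticFunction ℤ :=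
  ⟨fun n => legendreSym 5 (n.divisors.card : ℤ), by simp⟩

noncomputable def Af : ArithmeticFunction ℤ :=
  ⟨fun n => if Nat.sqrt n ^ 2 = n then ArithmeticFunction.moebius (Nat.sqrt n) else 0, by simp⟩

open scoped Classical in
noncomputable def Bf : ArithmeticFunction ℤ :=
  ⟨fun n => if 0 < n ∧ ∃ m, m ^ 5 = n then 1 else 0, by simp⟩

lemma Lf_apply (n : ℕ) : Lf n = legendreSym 5 (n.divisors.card : ℤ) := rfl
lemma Af_apply (n : ℕ) :
    Af n = if Nat.sqrt n ^ 2 = n then ArithmeticFunction.moebius (Nat.sqrt n) else 0 := rfl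
open scoped Classical in
lemma Bf_apply (n : ℕ) : Bf n = if 0 < n ∧ ∃ m, m ^ 5 = n then 1 else 0 := rfl

lemma Lf_mult : Lf.IsMultiplicative := by
  constructor
  · simp [Lf_apply]
  · intro m n h
    rw [Lf_apply, Lf_apply, Lf_apply, h.card_divisors_mul]
    push_cast
    exact legendreSym.mul 5 _ _

-- coprime decomposition lemmas
lemma sq_parts {m n : ℕ} (h : Nat.Coprime m n) (hsq : Nat.sqrt (m * n) ^ 2 = m * n) :
    Nat.sqrt m ^ 2 = m ∧ Nat.sqrt n ^ 2 = n := by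
  have hu : IsUnit (gcd m n) := by
    rw [Nat.isUnit_iff]
    exact h
  obtain ⟨a, ha⟩ : ∃ a, m = a ^ 2 := exists_eq_pow_of_mul_eq_pow hu hsq.symm
  have hu' : IsUnit (gcd n m) := by
    rw [Nat.isUnit_iff]
    exact h.symm
  obtain ⟨b, hb⟩ : ∃ b, n = b ^ 2 :=
    exists_eq_pow_of_mul_eq_pow hu' (by rw [mul_comm]; exact hsq.symm)
  subst ha hb
  rw [Nat.sqrt_eq', Nat.sqrt_eq']
  exact ⟨rfl, rfl⟩

lemma pow5_parts {m n : ℕ} (h : Nat.Coprime m n) {c : ℕ} (hc : c ^ 5 = m * n) :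
    (∃ a, a ^ 5 = m) ∧ ∃ b, b ^ 5 = n := by
  have hu : IsUnit (gcd m n) := by rw [Nat.isUnit_iff]; exact h
  have hu' : IsUnit (gcd n m) := by rw [Nat.isUnit_iff]; exact h.symm
  obtain ⟨a, ha⟩ : ∃ a, m = a ^ 5 := exists_eq_pow_of_mul_eq_pow hu hc.symm
  obtain ⟨b, hb⟩ : ∃ b, n = b ^ 5 :=
    exists_eq_pow_of_mul_eq_pow hu' (by rw [mul_comm]; exact hc.symm)
  exact ⟨⟨a, ha.symm⟩, ⟨b, hb.symm⟩⟩
lemma Af_mult : Af.IsMultiplicative := by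
  constructor
  · simp [Af_apply]
  · intro m n h
    by_cases hm : Nat.sqrt m ^ 2 = m
    · by_cases hn : Nat.sqrt n ^ 2 = n
      · have hmn : Nat.sqrt (m * n) = Nat.sqrt m * Nat.sqrt n := by
          conv_lhs => rw [← hm, ← hn, ← mul_pow, Nat.sqrt_eq']
        have hab : Nat.Coprime (Nat.sqrt m) (Nat.sqrt n) := by
          have h2 : Nat.Coprime (Nat.sqrt m ^ 2) (Nat.sqrt n ^ 2) := by
            rw [hm, hn]; exact h
          exact Nat.Coprime.coprime_dvd_left (dvd_pow_self _ two_ne_zero)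
            (Nat.Coprime.coprime_dvd_right (dvd_pow_self _ two_ne_zero) h2)
        rw [Af_apply, Af_apply, Af_apply, if_pos hm, if_pos hn,
          if_pos (by rw [hmn, mul_pow, hm, hn]), hmn,
          ArithmeticFunction.isMultiplicative_moebius.map_mul_of_coprime hab]
      · rw [Af_apply (m * n), Af_apply n, if_neg hn, mul_zero, if_neg]
        intro hc
        exact hn (sq_parts h hc).2
    · rw [Af_apply (m * n), Af_apply m, if_neg hm, zero_mul, if_neg]
      intro hc
      exact hm (sq_parts h hc).1

lemma Bf_mult : Bf.IsMultiplicative := by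
  classical
  constructor
  · rw [Bf_apply, if_pos ⟨one_pos, 1, one_pow 5⟩]
  · intro m n h
    rw [Bf_apply, Bf_apply, Bf_apply]
    by_cases H : 0 < m * n ∧ ∃ c, c ^ 5 = m * n
    · obtain ⟨hpos, c, hc⟩ := H
      obtain ⟨⟨a, ha⟩, ⟨b, hb⟩⟩ := pow5_parts h hc
      have hm0 : 0 < m := Nat.pos_of_ne_zero (fun e => by simp [e] at hpos)
      have hn0 : 0 < n := Nat.pos_of_ne_zero (fun e => by simp [e] at hpos)
      rw [if_pos ⟨hpos, c, hc⟩, if_pos ⟨hm0, a, ha⟩, if_pos ⟨hn0, b, hb⟩, one_mul]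
    · rw [if_neg H]
      by_cases h1 : 0 < m ∧ ∃ a, a ^ 5 = m
      · by_cases h2 : 0 < n ∧ ∃ b, b ^ 5 = n
        · exfalso
          obtain ⟨hm0, a, ha⟩ := h1
          obtain ⟨hn0, b, hb⟩ := h2
          exact H ⟨Nat.mul_pos hm0 hn0, a * b, by rw [mul_pow, ha, hb]⟩
        · rw [if_neg h2, mul_zero]
      · rw [if_neg h1, zero_mul]

lemma Af_pp {p : ℕ} (hp : p.Prime) (i : ℕ) :
    Af (p ^ i) = if i = 0 then 1 else if i = 2 then -1 else 0 := by
  rcases Nat.even_or_odd i with he | ho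
  · obtain ⟨j, rfl⟩ := he
    have key : (p ^ j) ^ 2 = p ^ (j + j) := by rw [← pow_mul]; congr 1; omega
    rw [Af_apply, show Nat.sqrt (p ^ (j + j)) = p ^ j by rw [← key, Nat.sqrt_eq'],
      if_pos key]
    match j with
    | 0 => simp
    | 1 => simp [ArithmeticFunction.moebius_apply_prime hp]
    | (j + 2) =>
      rw [ArithmeticFunction.moebius_apply_prime_pow hp (by omega)]
      rw [if_neg (by omega), if_neg (by omega), if_neg (by omega)]
  · obtain ⟨t, rfl⟩ := ho
    rw [Af_apply, if_neg, if_neg (by omega), if_neg (by omega)]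
    intro hc
    have h2 := congrArg (fun s => s.factorization p) hc
    simp only [Nat.factorization_pow, Finsupp.smul_apply, Nat.Prime.factorization hp,
      Finsupp.single_eq_same, smul_eq_mul] at h2
    omega

lemma Bf_pp {p : ℕ} (hp : p.Prime) (j : ℕ) :
    Bf (p ^ j) = if j % 5 = 0 then 1 else 0 := by
  rw [Bf_apply]
  by_cases h5 : j % 5 = 0
  · rw [if_pos h5, if_pos]
    exact ⟨pow_pos hp.pos j, ⟨p ^ (j / 5), by rw [← pow_mul]; congr 1; omega⟩⟩
  · rw [if_neg h5, if_neg]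
    rintro ⟨-, m, hm⟩
    have h2 := congrArg (fun s => s.factorization p) hm
    simp only [Nat.factorization_pow, Finsupp.smul_apply, Nat.Prime.factorization hp,
      Finsupp.single_eq_same, smul_eq_mul] at h2
    omega

def tval (k : ℕ) : ℤ := if k % 5 = 0 then 1 else if k % 5 = 2 then -1 else 0

lemma consec5N (m : ℕ) :
    legendreSym 5 ((m + 2 : ℕ) : ℤ) + legendreSym 5 ((m + 3 : ℕ) : ℤ)
      + legendreSym 5 ((m + 4 : ℕ) : ℤ) + legendreSym 5 ((m + 5 : ℕ) : ℤ)
      + legendreSym 5 ((m + 6 : ℕ) : ℤ) = 0 := by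
  have e2 : ((m + 2 : ℕ) : ℤ) % (5 : ℕ) = (((m % 5 : ℕ) : ℤ) + 2) % 5 := by push_cast; omega
  have e3 : ((m + 3 : ℕ) : ℤ) % (5 : ℕ) = (((m % 5 : ℕ) : ℤ) + 3) % 5 := by push_cast; omega
  have e4 : ((m + 4 : ℕ) : ℤ) % (5 : ℕ) = (((m % 5 : ℕ) : ℤ) + 4) % 5 := by push_cast; omega
  have e5 : ((m + 5 : ℕ) : ℤ) % (5 : ℕ) = (((m % 5 : ℕ) : ℤ) + 5) % 5 := by push_cast; omega
  have e6 : ((m + 6 : ℕ) : ℤ) % (5 : ℕ) = (((m % 5 : ℕ) : ℤ) + 6) % 5 := by push_cast; omega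
  rw [legendreSym.mod 5 ((m + 2 : ℕ) : ℤ), legendreSym.mod 5 ((m + 3 : ℕ) : ℤ),
    legendreSym.mod 5 ((m + 4 : ℕ) : ℤ), legendreSym.mod 5 ((m + 5 : ℕ) : ℤ),
    legendreSym.mod 5 ((m + 6 : ℕ) : ℤ), e2, e3, e4, e5, e6]
  have h0 : m % 5 = 0 ∨ m % 5 = 1 ∨ m % 5 = 2 ∨ m % 5 = 3 ∨ m % 5 = 4 := by omega
  rcases h0 with h | h | h | h | h <;> rw [h] <;> decide

lemma Ssum (k : ℕ) :
    ∑ i ∈ Finset.range (k + 1), legendreSym 5 ((i + 1 : ℕ) : ℤ) = tval k := by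
  induction k using Nat.strong_induction_on with
  | _ k ih =>
    by_cases hk : k < 5
    · interval_cases k <;> simp [Finset.sum_range_succ, tval] <;> decide
    · obtain ⟨m, rfl⟩ : ∃ m, k = m + 5 := ⟨k - 5, by omega⟩
      rw [show m + 5 + 1 = (m + 4) + 1 + 1 by omega, Finset.sum_range_succ,
        show m + 4 + 1 = (m + 3) + 1 + 1 by omega, Finset.sum_range_succ,
        show m + 3 + 1 = (m + 2) + 1 + 1 by omega, Finset.sum_range_succ,
        show m + 2 + 1 = (m + 1) + 1 + 1 by omega, Finset.sum_range_succ,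
        show m + 1 + 1 = m + 1 + 1 by omega, Finset.sum_range_succ,
        ih m (by omega)]
      have hc := consec5N m
      have ht : tval (m + 5) = tval m := by
        simp only [tval, Nat.add_mod_right]
      rw [show m + 1 + 1 = m + 2 by omega, show m + 2 + 1 = m + 3 by omega,
        show m + 3 + 1 = m + 4 by omega, show m + 4 + 1 = m + 5 by omega,
        show m + 5 + 1 = m + 6 by omega, ht]
      linarith [hc]

lemma card_divisors_pp {p : ℕ} (hp : p.Prime) (i : ℕ) : (p ^ i).divisors.card = i + 1 := by
  rw [Nat.divisors_prime_pow hp, Finset.card_map, Finset.card_range]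

lemma key : Lf * (ArithmeticFunction.zeta : ArithmeticFunction ℕ) = Af * Bf := by
  rw [ArithmeticFunction.IsMultiplicative.eq_iff_eq_on_prime_powers _
    (Lf_mult.mul ArithmeticFunction.isMultiplicative_zeta.natCast) _ (Af_mult.mul Bf_mult)]
  intro p k hp
  rw [ArithmeticFunction.coe_mul_zeta_apply, Nat.sum_divisors_prime_pow hp]
  have hL : ∀ i, Lf (p ^ i) = legendreSym 5 ((i + 1 : ℕ) : ℤ) := fun i => by
    rw [Lf_apply, card_divisors_pp hp]
  rw [Finset.sum_congr rfl (fun i _ => hL i), Ssum k]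
  -- now RHS
  rw [ArithmeticFunction.mul_apply, Nat.sum_divisorsAntidiagonal (f := fun a b => Af a * Bf b),
    Nat.sum_divisors_prime_pow hp]
  have hterm : ∀ i ∈ Finset.range (k + 1),
      Af (p ^ i) * Bf (p ^ k / p ^ i) = Af (p ^ i) * Bf (p ^ (k - i)) := by
    intro i hi
    rw [Finset.mem_range] at hi
    rw [Nat.pow_div (by omega) hp.pos]
  rw [Finset.sum_congr rfl hterm]
  by_cases hk2 : 2 ≤ k
  · have hsub : ({0, 2} : Finset ℕ) ⊆ Finset.range (k + 1) := by
      intro t ht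
      simp only [Finset.mem_insert, Finset.mem_singleton] at ht
      rw [Finset.mem_range]
      omega
    rw [← Finset.sum_subset hsub (by
      intro t ht hns
      simp only [Finset.mem_insert, Finset.mem_singleton, not_or] at hns
      rw [Af_pp hp, if_neg hns.1, if_neg hns.2, zero_mul])]
    rw [Finset.sum_pair (by norm_num : (0 : ℕ) ≠ 2), Af_pp hp, Af_pp hp, Bf_pp hp, Bf_pp hp]
    simp only [tval, Nat.sub_zero]
    norm_num
    split_ifs <;> omega
  · interval_cases k
    · simp only [Finset.sum_range_succ, Finset.sum_range_zero, Af_pp hp, Bf_pp hp, tval]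
      norm_num
    · simp only [Finset.sum_range_succ, Finset.sum_range_zero, Af_pp hp, Bf_pp hp, tval]
      norm_num

open scoped Classical in
lemma core (N D : ℕ) (hN : 1 ≤ N) (hDN : D ≤ N)
    (hD : ∀ d m : ℕ, 1 ≤ d → 1 ≤ m → d ^ 2 * m ^ 5 ≤ N → d ≤ D) :
    ∑ n ∈ Icc 1 N, (Af * Bf) n
      = ∑ d ∈ Icc 1 D, ArithmeticFunction.moebius d *
        (((Icc 1 N).filter (fun m => d ^ 2 * m ^ 5 ≤ N)).card : ℤ) := by
  classical
  set P : Finset (ℕ × ℕ) := (Icc 1 N ×ˢ Icc 1 N).filter (fun q => q.1 ^ 2 * q.2 ^ 5 ≤ N) with hP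
  have hPmem : ∀ q : ℕ × ℕ, q ∈ P ↔
      (1 ≤ q.1 ∧ q.1 ≤ N) ∧ (1 ≤ q.2 ∧ q.2 ≤ N) ∧ q.1 ^ 2 * q.2 ^ 5 ≤ N := by
    intro q
    simp only [hP, Finset.mem_filter, Finset.mem_product, Finset.mem_Icc]
    tauto
  -- step 1 : per-n identity
  have step_n : ∀ n ∈ Icc 1 N, (Af * Bf) n
      = ∑ q ∈ P.filter (fun q => q.1 ^ 2 * q.2 ^ 5 = n), ArithmeticFunction.moebius q.1 := by
    intro n hn
    rw [Finset.mem_Icc] at hn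
    rw [ArithmeticFunction.mul_apply]
    have h1 : ∑ q ∈ (n.divisorsAntidiagonal.filter
          (fun q => Nat.sqrt q.1 ^ 2 = q.1 ∧ ∃ m, 0 < m ∧ m ^ 5 = q.2)), Af q.1 * Bf q.2
        = ∑ q ∈ n.divisorsAntidiagonal, Af q.1 * Bf q.2 := by
      apply Finset.sum_filter_of_ne
      intro q hq hval
      have hA : Af q.1 ≠ 0 := left_ne_zero_of_mul hval
      have hB : Bf q.2 ≠ 0 := right_ne_zero_of_mul hval
      refine ⟨?_, ?_⟩
      · by_contra hc
        exact hA (by rw [Af_apply, if_neg hc])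
      · have h2 : 0 < q.2 ∧ ∃ m, m ^ 5 = q.2 := by
          by_contra hc
          exact hB (by rw [Bf_apply, if_neg hc])
        obtain ⟨hpos, m, hm⟩ := h2
        refine ⟨m, Nat.pos_of_ne_zero (fun e => by rw [e] at hm; simp at hm; omega), hm⟩
    rw [← h1]
    refine (Finset.sum_bij (fun (q : ℕ × ℕ) _ => ((q.1 ^ 2, q.2 ^ 5) : ℕ × ℕ)) ?_ ?_ ?_ ?_).symm
    · intro q hq
      rw [Finset.mem_filter, hPmem] at hq
      obtain ⟨⟨⟨hq1, _⟩, ⟨hq2, _⟩, _⟩, hqn⟩ := hq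
      rw [Finset.mem_filter, Nat.mem_divisorsAntidiagonal]
      exact ⟨⟨hqn, by omega⟩, by rw [Nat.sqrt_eq'], ⟨q.2, by omega, rfl⟩⟩
    · intro a ha b hb hab
      rw [Prod.mk.injEq] at hab
      exact Prod.ext (Nat.pow_left_injective (by norm_num) hab.1)
        (Nat.pow_left_injective (by norm_num) hab.2)
    · intro b hb
      rw [Finset.mem_filter, Nat.mem_divisorsAntidiagonal] at hb
      obtain ⟨⟨hbn, hn0⟩, hsq, m, hm0, hm⟩ := hb
      refine ⟨(Nat.sqrt b.1, m), ?_, ?_⟩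
      · have hb1 : 1 ≤ b.1 := by
          rcases Nat.eq_zero_or_pos b.1 with h0 | h0
          · rw [h0, zero_mul] at hbn; omega
          · exact h0
        have hb2 : 1 ≤ b.2 := by
          rcases Nat.eq_zero_or_pos b.2 with h0 | h0
          · rw [h0, mul_zero] at hbn; omega
          · exact h0
        have ha1 : 1 ≤ Nat.sqrt b.1 := by
          rcases Nat.eq_zero_or_pos (Nat.sqrt b.1) with h0 | h0
          · rw [h0] at hsq; simp at hsq; omega
          · exact h0
        have haleb : Nat.sqrt b.1 ≤ b.1 := by
          calc Nat.sqrt b.1 ≤ Nat.sqrt b.1 ^ 2 := Nat.le_self_pow (by norm_num) _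
            _ = b.1 := hsq
        have hmleb : m ≤ b.2 := by
          calc m ≤ m ^ 5 := Nat.le_self_pow (by norm_num) _
            _ = b.2 := hm
        have hb1N : b.1 ≤ N := by
          calc b.1 ≤ b.1 * b.2 := Nat.le_mul_of_pos_right _ hb2
            _ = n := hbn
            _ ≤ N := hn.2
        have hb2N : b.2 ≤ N := by
          calc b.2 ≤ b.1 * b.2 := Nat.le_mul_of_pos_left _ hb1
            _ = n := hbn
            _ ≤ N := hn.2
        rw [Finset.mem_filter, hPmem]
        have hprod : Nat.sqrt b.1 ^ 2 * m ^ 5 = n := by rw [hsq, hm]; exact hbn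
        exact ⟨⟨⟨ha1, le_trans haleb hb1N⟩, ⟨hm0, le_trans hmleb hb2N⟩,
          by rw [hprod]; exact hn.2⟩, hprod⟩
      · exact Prod.ext (by simp [hsq]) (by simp [hm])
    · intro q hq
      rw [Finset.mem_filter, hPmem] at hq
      obtain ⟨⟨⟨hq1, _⟩, ⟨hq2, _⟩, _⟩, _⟩ := hq
      rw [Af_apply, Bf_apply]
      rw [if_pos (by rw [Nat.sqrt_eq']), Nat.sqrt_eq',
        if_pos ⟨by positivity, ⟨q.2, rfl⟩⟩, mul_one]
  rw [Finset.sum_congr rfl step_n, Finset.sum_fiberwise_of_maps_to (fun q hq => by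
    rw [hPmem] at hq
    rw [Finset.mem_Icc]
    exact ⟨Nat.mul_pos (pow_pos hq.1.1 2) (pow_pos hq.2.1.1 5), hq.2.2⟩)]
  -- step 2: unfold P as a double sum
  rw [hP, Finset.sum_filter, Finset.sum_product]
  have inner : ∀ d ∈ Icc 1 N,
      (∑ m ∈ Icc 1 N, if d ^ 2 * m ^ 5 ≤ N then ArithmeticFunction.moebius d else 0)
        = ArithmeticFunction.moebius d *
          (((Icc 1 N).filter (fun m => d ^ 2 * m ^ 5 ≤ N)).card : ℤ) := by
    intro d _
    rw [← Finset.sum_filter, Finset.sum_const, nsmul_eq_mul, mul_comm]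
  rw [Finset.sum_congr rfl inner]
  apply (Finset.sum_subset (Finset.Icc_subset_Icc_right hDN) ?_).symm
  intro d hd hnd
  rw [Finset.mem_Icc] at hd
  rw [Finset.mem_Icc] at hnd
  have hDd : D < d := by omega
  have hempty : (Icc 1 N).filter (fun m => d ^ 2 * m ^ 5 ≤ N) = ∅ := by
    rw [Finset.filter_eq_empty_iff]
    intro m hm
    rw [Finset.mem_Icc] at hm
    intro hle
    exact absurd (hD d m hd.1 hm.1 hle) (by omega)
  rw [hempty]
  simp

open scoped Classical in
lemma card_eq (x : ℝ) (hx : 1 ≤ x) (d : ℕ) (hd : 1 ≤ d) :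
    ((Icc 1 ⌊x⌋₊).filter (fun m => d ^ 2 * m ^ 5 ≤ ⌊x⌋₊)).card
      = ⌊(x / (d : ℝ) ^ 2) ^ ((1 : ℝ) / 5)⌋₊ := by
  have hx0 : (0 : ℝ) ≤ x := le_trans zero_le_one hx
  have hd0 : (0 : ℝ) < (d : ℝ) ^ 2 := by positivity
  have hy0 : (0 : ℝ) ≤ x / (d : ℝ) ^ 2 := by positivity
  have key : ∀ m : ℕ, d ^ 2 * m ^ 5 ≤ ⌊x⌋₊ ↔ m ≤ ⌊(x / (d : ℝ) ^ 2) ^ ((1 : ℝ) / 5)⌋₊ := by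
    intro m
    rw [Nat.le_floor_iff hx0, Nat.le_floor_iff (Real.rpow_nonneg hy0 _),
      show (1 : ℝ) / 5 = ((5 : ℝ))⁻¹ by norm_num,
      Real.le_rpow_inv_iff_of_pos (Nat.cast_nonneg m) hy0 (by norm_num),
      show ((m : ℝ)) ^ (5 : ℝ) = (m : ℝ) ^ (5 : ℕ) by
        rw [show ((5 : ℝ)) = ((5 : ℕ) : ℝ) by norm_num, Real.rpow_natCast],
      le_div_iff₀ hd0]
    push_cast
    constructor <;> intro h <;> nlinarith [h]
  have hset : (Icc 1 ⌊x⌋₊).filter (fun m => d ^ 2 * m ^ 5 ≤ ⌊x⌋₊)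
      = Icc 1 ⌊(x / (d : ℝ) ^ 2) ^ ((1 : ℝ) / 5)⌋₊ := by
    ext m
    simp only [Finset.mem_filter, Finset.mem_Icc]
    constructor
    · rintro ⟨⟨h1, _⟩, h3⟩
      exact ⟨h1, (key m).1 h3⟩
    · rintro ⟨h1, h2⟩
      have h3 := (key m).2 h2
      refine ⟨⟨h1, ?_⟩, h3⟩
      calc m ≤ m ^ 5 := Nat.le_self_pow (by norm_num) m
        _ ≤ d ^ 2 * m ^ 5 := Nat.le_mul_of_pos_left _ (pow_pos hd 2)
        _ ≤ ⌊x⌋₊ := h3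
  rw [hset, Nat.card_Icc]
  omega

theorem sum_lam5_conv_one (x : ℝ) (hx : 1 ≤ x) :
    ∑ n ∈ Finset.Icc 1 ⌊x⌋₊, ∑ d ∈ n.divisors, lam5 d =
      ∑ d ∈ Finset.Icc 1 ⌊Real.sqrt x⌋₊,
        (ArithmeticFunction.moebius d : ℝ) * (⌊(x / (d : ℝ) ^ 2) ^ ((1 : ℝ) / 5)⌋₊ : ℝ) := by
  classical
  have hx0 : (0 : ℝ) ≤ x := le_trans zero_le_one hx
  set N := ⌊x⌋₊ with hNdef
  set D := ⌊Real.sqrt x⌋₊ with hDdef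
  have hN : 1 ≤ N := Nat.le_floor (by exact_mod_cast hx)
  have hNx : (N : ℝ) ≤ x := Nat.floor_le hx0
  have hDN : D ≤ N := Nat.floor_le_floor (by
    calc Real.sqrt x ≤ Real.sqrt (x ^ 2) := Real.sqrt_le_sqrt (by nlinarith)
      _ = x := Real.sqrt_sq hx0)
  have hD : ∀ d m : ℕ, 1 ≤ d → 1 ≤ m → d ^ 2 * m ^ 5 ≤ N → d ≤ D := by
    intro d m hd hm hle
    apply Nat.le_floor
    rw [Real.le_sqrt (by positivity) hx0]
    have h1 : ((d ^ 2 * m ^ 5 : ℕ) : ℝ) ≤ x := le_trans (by exact_mod_cast hle) hNx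
    push_cast at h1
    have hm1 : (1 : ℝ) ≤ (m : ℝ) ^ 5 := by
      have h2 : (1 : ℝ) ≤ (m : ℝ) := by exact_mod_cast hm
      exact one_le_pow₀ h2
    nlinarith
  -- LHS to integer form
  have hLHS : ∀ n : ℕ, ∑ d ∈ n.divisors, lam5 d = (((Af * Bf) n : ℤ) : ℝ) := by
    intro n
    rw [← key, ArithmeticFunction.coe_mul_zeta_apply]
    push_cast [lam5, Lf_apply]
    rfl
  rw [Finset.sum_congr rfl (fun n _ => hLHS n), ← Int.cast_sum,
    core N D hN hDN hD, Int.cast_sum]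
  apply Finset.sum_congr rfl
  intro d hd
  rw [Finset.mem_Icc] at hd
  rw [card_eq x hx d hd.1]
  push_cast
  ring
end

section
/- There is an absolute constant C > 0 such that for all real x ≥ e^4 and 1 ≤ y ≤ x, ∑_{x < n ≤ x+y} (λ_5 ⋆ 𝟏)(n) ≤ C · ( M(x,y) log x + y x^{-1/2} + x^{-1/5} y^{2/5} ), where M(x,y) denotes the maximum, over integers N with (16 y² x^{-1})^{1/5} < N ≤ (2x)^{1/5}, of 𝓡( n ↦ √(x/n⁵), N, y/√(N⁵ x) ). -/
set_option maxHeartbeats 1000000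

/-- `𝓡(f, N, δ)` : the number of integers `n ∈ [N, 2N]` with `‖f(n)‖ < δ`, where `‖t‖`
is the distance from `t` to the nearest integer. -/
noncomputable def Rcount (f : ℝ → ℝ) (N : ℕ) (δ : ℝ) : ℕ :=
  ((Finset.Icc N (2 * N)).filter (fun n : ℕ => |f n - round (f n)| < δ)).card

/-- `M(x,y)` : the maximum of `𝓡(n ↦ √(x/n⁵), N, y/√(N⁵x))` over integers `N` with
`(16y²/x)^{1/5} < N ≤ (2x)^{1/5}`. -/
noncomputable def Mxy (x y : ℝ) : ℕ :=
  ((Finset.Icc 1 ⌊(2 * x) ^ ((1 : ℝ) / 5)⌋₊).filter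
      (fun N : ℕ => (16 * y ^ 2 / x) ^ ((1 : ℝ) / 5) < (N : ℝ) ∧
        (N : ℝ) ≤ (2 * x) ^ ((1 : ℝ) / 5))).sup
    fun N => Rcount (fun t => Real.sqrt (x / t ^ 5)) N (y / Real.sqrt ((N : ℝ) ^ 5 * x))

open ArithmeticFunction Finset

noncomputable def lamZ : ArithmeticFunction ℤ :=
  ⟨fun n => if n = 0 then 0 else legendreSym 5 (n.divisors.card : ℤ), by simp⟩

lemma lamZ_apply {n : ℕ} (hn : n ≠ 0) :
    lamZ n = legendreSym 5 (n.divisors.card : ℤ) := if_neg hn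

lemma lamZ_mult : lamZ.IsMultiplicative := by
  constructor
  · rw [lamZ_apply one_ne_zero]
    simp [Nat.divisors_one, legendreSym.at_one]
  · intro m n h
    rcases eq_or_ne m 0 with rfl | hm
    · have : n = 1 := by simpa using h
      subst this; simp [lamZ]
    rcases eq_or_ne n 0 with rfl | hn
    · have : m = 1 := by simpa [Nat.coprime_zero_right] using h
      subst this; simp [lamZ]
    rw [lamZ_apply (mul_ne_zero hm hn), lamZ_apply hm, lamZ_apply hn,
      h.card_divisors_mul]
    push_cast
    exact legendreSym.mul 5 _ _

noncomputable def Gfun : ArithmeticFunction ℤ := lamZ * (zeta : ArithmeticFunction ℤ)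

lemma Gfun_mult : Gfun.IsMultiplicative := lamZ_mult.mul isMultiplicative_zeta.natCast

lemma Gfun_apply (n : ℕ) : Gfun n = ∑ d ∈ n.divisors, legendreSym 5 (d.divisors.card : ℤ) := by
  rw [Gfun, coe_mul_zeta_apply]
  exact Finset.sum_congr rfl fun d hd => lamZ_apply (Nat.pos_of_mem_divisors hd).ne'

noncomputable def Sleg (k : ℕ) : ℤ := ∑ j ∈ Finset.range (k + 1), legendreSym 5 ((j : ℤ) + 1)

lemma leg_period (a : ℤ) : legendreSym 5 (a + 5) = legendreSym 5 a := by
  rw [legendreSym.mod 5 (a + 5), legendreSym.mod 5 a]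
  norm_num [Int.add_mul_emod_self_left]

lemma block_int (a : ℤ) :
    legendreSym 5 a + legendreSym 5 (a + 1) + legendreSym 5 (a + 2)
      + legendreSym 5 (a + 3) + legendreSym 5 (a + 4) = 0 := by
  rw [legendreSym.mod 5 a, legendreSym.mod 5 (a + 1), legendreSym.mod 5 (a + 2),
    legendreSym.mod 5 (a + 3), legendreSym.mod 5 (a + 4)]
  have h5 : a % (5 : ℤ) = 0 ∨ a % 5 = 1 ∨ a % 5 = 2 ∨ a % 5 = 3 ∨ a % 5 = 4 := by omega
  have c : ((5 : ℕ) : ℤ) = 5 := by norm_num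
  rw [c]
  obtain h | h | h | h | h := h5 <;>
    · have g1 : (a + 1) % 5 = (a % 5 + 1) % 5 := by omega
      have g2 : (a + 2) % 5 = (a % 5 + 2) % 5 := by omega
      have g3 : (a + 3) % 5 = (a % 5 + 3) % 5 := by omega
      have g4 : (a + 4) % 5 = (a % 5 + 4) % 5 := by omega
      rw [g1, g2, g3, g4, h]
      decide

lemma Sleg_add_five (k : ℕ) : Sleg (k + 5) = Sleg k := by
  simp only [Sleg, show k + 5 + 1 = k + 1 + 1 + 1 + 1 + 1 + 1 from rfl]
  rw [Finset.sum_range_succ, Finset.sum_range_succ, Finset.sum_range_succ,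
    Finset.sum_range_succ, Finset.sum_range_succ]
  push_cast
  have c1 : (k : ℤ) + 1 + 1 = (k : ℤ) + 2 := by ring
  have c3 : (k : ℤ) + 3 + 1 = (k : ℤ) + 2 + 2 := by ring
  have c4 : (k : ℤ) + 4 + 1 = (k : ℤ) + 2 + 3 := by ring
  have c5 : (k : ℤ) + 5 + 1 = (k : ℤ) + 2 + 4 := by ring
  rw [c1, c3, c4, c5]
  have h := block_int ((k : ℤ) + 2)
  linarith [h]

lemma Sleg_mod (k : ℕ) : Sleg k = Sleg (k % 5) := by
  induction k using Nat.strong_induction_on with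
  | _ k ih =>
    by_cases hk : k < 5
    · rw [Nat.mod_eq_of_lt hk]
    · have h5 : k - 5 + 5 = k := by omega
      have := ih (k - 5) (by omega)
      rw [← h5, Sleg_add_five, this]
      congr 1
      omega

lemma Sleg_vals : Sleg 0 = 1 ∧ Sleg 1 = 0 ∧ Sleg 2 = -1 ∧ Sleg 3 = 0 ∧ Sleg 4 = 0 := by
  refine ⟨?_, ?_, ?_, ?_, ?_⟩ <;>
    · simp only [Sleg, Finset.sum_range_succ, Finset.sum_range_one]
      norm_num

lemma Sleg_le_one (k : ℕ) : Sleg k ≤ 1 := by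
  rw [Sleg_mod]
  obtain ⟨v0, v1, v2, v3, v4⟩ := Sleg_vals
  have h5 : k % 5 = 0 ∨ k % 5 = 1 ∨ k % 5 = 2 ∨ k % 5 = 3 ∨ k % 5 = 4 := by omega
  obtain h | h | h | h | h := h5 <;> rw [h] <;> omega

lemma Sleg_abs (k : ℕ) : |Sleg k| ≤ 1 := by
  rw [abs_le, Sleg_mod]
  obtain ⟨v0, v1, v2, v3, v4⟩ := Sleg_vals
  have h5 : k % 5 = 0 ∨ k % 5 = 1 ∨ k % 5 = 2 ∨ k % 5 = 3 ∨ k % 5 = 4 := by omega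
  obtain h | h | h | h | h := h5 <;> rw [h] <;> constructor <;> omega

lemma Sleg_ne_zero {k : ℕ} (h : Sleg k ≠ 0) : k % 5 = 0 ∨ k % 5 = 2 := by
  rw [Sleg_mod] at h
  obtain ⟨v0, v1, v2, v3, v4⟩ := Sleg_vals
  by_contra hc
  push_neg at hc
  have h5 : k % 5 = 1 ∨ k % 5 = 3 ∨ k % 5 = 4 := by omega
  obtain hh | hh | hh := h5 <;> rw [hh] at h <;> omega

lemma Gfun_prime_pow {p : ℕ} (hp : p.Prime) (k : ℕ) : Gfun (p ^ k) = Sleg k := by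
  rw [Gfun_apply, Nat.sum_divisors_prime_pow hp]
  refine Finset.sum_congr rfl fun j hj => ?_
  have : (p ^ j).divisors.card = j + 1 := by
    rw [Nat.divisors_prime_pow hp, Finset.card_map, Finset.card_range]
  rw [this]
  push_cast
  ring_nf

def HasRep (n : ℕ) : Prop := ∃ s w : ℕ, 0 < s ∧ 0 < w ∧ n = s ^ 2 * w ^ 5

lemma Gfun_le_one {n : ℕ} (hn : n ≠ 0) : Gfun n ≤ 1 := by
  have h := Gfun_mult.multiplicative_factorization Gfun hn
  refine le_trans (le_abs_self _) ?_
  rw [h, Finsupp.prod, Finset.abs_prod]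
  refine Finset.prod_le_one (fun p _ => abs_nonneg _) fun p hp => ?_
  rw [Gfun_prime_pow (Nat.prime_of_mem_primeFactors
    ((Nat.support_factorization n) ▸ hp))]
  exact Sleg_abs _

lemma Gfun_pos_rep {n : ℕ} (hn : n ≠ 0) (hpos : 0 < Gfun n) : HasRep n := by
  have h := Gfun_mult.multiplicative_factorization Gfun hn
  have hall : ∀ p ∈ n.factorization.support,
      n.factorization p % 5 = 0 ∨ n.factorization p % 5 = 2 := by
    intro p hp
    refine Sleg_ne_zero fun h0 => ?_
    rw [← Gfun_prime_pow (Nat.prime_of_mem_primeFactors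
      ((Nat.support_factorization n) ▸ hp))] at h0
    rw [h, Finsupp.prod] at hpos
    rw [Finset.prod_eq_zero hp h0] at hpos
    exact lt_irrefl 0 hpos
  have hprime : ∀ p ∈ n.factorization.support, p.Prime := fun p hp =>
    Nat.prime_of_mem_primeFactors ((Nat.support_factorization n) ▸ hp)
  refine ⟨∏ p ∈ n.factorization.support, if n.factorization p % 5 = 2 then p else 1,
    ∏ p ∈ n.factorization.support, p ^ (n.factorization p / 5), ?_, ?_, ?_⟩
  · refine Finset.prod_pos fun p hp => ?_
    split
    · exact (hprime p hp).pos
    · norm_num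
  · exact Finset.prod_pos fun p hp => pow_pos (hprime p hp).pos _
  · conv_lhs => rw [← Nat.factorization_prod_pow_eq_self hn]
    rw [Finsupp.prod, ← Finset.prod_pow, ← Finset.prod_pow, ← Finset.prod_mul_distrib]
    refine Finset.prod_congr rfl fun p hp => ?_
    obtain h0 | h2 := hall p hp
    · rw [if_neg (by omega)]
      have : n.factorization p = 5 * (n.factorization p / 5) := by omega
      rw [one_pow, one_mul, ← pow_mul]
      conv_lhs => rw [this]
      ring
    · rw [if_pos h2, ← pow_mul]
      have : n.factorization p = 2 + (n.factorization p / 5) * 5 := by omega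
      conv_lhs => rw [this]
      rw [pow_add]

open scoped Classical in
lemma key_partA (n : ℕ) (hn : n ≠ 0) :
    (∑ d ∈ n.divisors, lam5 d) ≤ if HasRep n then 1 else 0 := by
  have hsum : (∑ d ∈ n.divisors, lam5 d) = ((Gfun n : ℤ) : ℝ) := by
    rw [Gfun_apply]
    push_cast [lam5]
    rfl
  rw [hsum]
  split
  · exact_mod_cast Gfun_le_one hn
  · next h =>
    have hle : Gfun n ≤ 0 := by
      by_contra hc
      exact h (Gfun_pos_rep hn (by omega))
    exact_mod_cast hle



lemma sum_inv_sq_le' : ∀ W : ℕ, 1 ≤ W → ∑ w ∈ Finset.Icc 1 W, ((w : ℝ) ^ 2)⁻¹ ≤ 2 - (W : ℝ)⁻¹ := by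
  intro W
  induction W with
  | zero => omega
  | succ n ih =>
    intro _
    rcases Nat.eq_zero_or_pos n with rfl | hn
    · norm_num
    · rw [Finset.sum_Icc_succ_top (by omega)]
      have h1 := ih hn
      have hpos : (0 : ℝ) < n := by exact_mod_cast hn
      have hpos1 : (0 : ℝ) < (n : ℝ) + 1 := by linarith
      have e : (n : ℝ)⁻¹ - ((n : ℝ) + 1)⁻¹ = ((n : ℝ) * ((n : ℝ) + 1))⁻¹ := by
        field_simp
        ring
      have mono : (((n : ℝ) + 1) ^ 2)⁻¹ ≤ ((n : ℝ) * ((n : ℝ) + 1))⁻¹ := by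
        apply inv_anti₀ (by positivity)
        nlinarith
      push_cast
      linarith

lemma sum_inv_sq_le (W : ℕ) : ∑ w ∈ Finset.Icc 1 W, ((w : ℝ) ^ 2)⁻¹ ≤ 2 := by
  rcases Nat.eq_zero_or_pos W with rfl | hW
  · norm_num
  · have := sum_inv_sq_le' W hW
    have : (0:ℝ) < (W:ℝ) := by exact_mod_cast hW
    have h2 := sum_inv_sq_le' W hW
    have h3 : (0:ℝ) ≤ (W:ℝ)⁻¹ := by positivity
    linarith

lemma card_le_of_interval {a b : ℝ} (ha : 0 ≤ a) (hb : 0 ≤ b) (hab0 : a ≤ b) (F : Finset ℕ)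
    (h : ∀ s ∈ F, a < (s : ℝ) ∧ (s : ℝ) ≤ b) : (F.card : ℝ) ≤ b - a + 1 := by
  have hsub : F ⊆ Finset.Ioc ⌊a⌋₊ ⌊b⌋₊ := fun s hs => by
    obtain ⟨h1, h2⟩ := h s hs
    rw [Finset.mem_Ioc]
    exact ⟨(Nat.floor_lt ha).mpr h1, Nat.le_floor h2⟩
  have hcard := Finset.card_le_card hsub
  rw [Nat.card_Ioc] at hcard
  rcases le_or_gt ⌊a⌋₊ ⌊b⌋₊ with hab | hab
  · have h1 : (F.card : ℝ) ≤ (⌊b⌋₊ : ℝ) - (⌊a⌋₊ : ℝ) := by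
      have := (Nat.cast_le (α := ℝ)).mpr hcard
      rwa [Nat.cast_sub hab] at this
    have h2 : (⌊b⌋₊ : ℝ) ≤ b := Nat.floor_le hb
    have h3 : a < (⌊a⌋₊ : ℝ) + 1 := Nat.lt_floor_add_one a
    linarith
  · have : F.card = 0 := by omega
    rw [this]
    have h2 : (⌊b⌋₊ : ℝ) ≤ b := Nat.floor_le hb
    have h3 : a < (⌊a⌋₊ : ℝ) + 1 := Nat.lt_floor_add_one a
    push_cast
    linarith

lemma sqrt_gap {x y Wr : ℝ} (hx : 0 < x) (hy : 0 ≤ y) (hW : 0 < Wr) :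
    Real.sqrt ((x + y) / Wr) - Real.sqrt (x / Wr) ≤ y / (2 * Real.sqrt (Wr * x)) := by
  set A := Real.sqrt (x / Wr) with hA
  set B := Real.sqrt ((x + y) / Wr) with hB
  have hApos : 0 < A := Real.sqrt_pos.mpr (by positivity)
  have hA2 : A ^ 2 = x / Wr := Real.sq_sqrt (by positivity)
  have hB2 : B ^ 2 = (x + y) / Wr := Real.sq_sqrt (by positivity)
  have hA2' : Wr * A ^ 2 = x := by rw [hA2]; field_simp
  have hB2' : Wr * B ^ 2 = x + y := by rw [hB2]; field_simp
  have hAB : A ≤ B := Real.sqrt_le_sqrt (by gcongr; linarith)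
  have h1 : (Wr * A) ^ 2 = Wr * x := by rw [mul_pow]; nlinarith [hA2']
  have hD : Real.sqrt (Wr * x) = Wr * A := by
    rw [← h1, Real.sqrt_sq (by positivity)]
  rw [hD, le_div_iff₀ (by positivity)]
  nlinarith [mul_nonneg hW.le (sq_nonneg (B - A))]

lemma round_eq_nat {a : ℝ} {s : ℕ} (h1 : a < s) (h2 : (s : ℝ) - a < 1 / 2) :
    round a = (s : ℤ) := by
  rw [round_eq, Int.floor_eq_iff]
  constructor <;> push_cast <;> linarith

lemma le_rpow_fifth {c z : ℝ} (hc : 0 ≤ c) (h : c ^ (5 : ℕ) ≤ z) : c ≤ z ^ ((1 : ℝ) / 5) := by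
  have h0 : (0:ℝ) ≤ z := le_trans (by positivity) h
  calc c = (c ^ (5 : ℕ)) ^ ((1 : ℝ) / 5) := by
        rw [← Real.rpow_natCast c 5, ← Real.rpow_mul hc]
        norm_num
    _ ≤ z ^ ((1 : ℝ) / 5) := Real.rpow_le_rpow (by positivity) h (by norm_num)

lemma rpow_fifth_pow {z : ℝ} (hz : 0 ≤ z) : (z ^ ((1:ℝ)/5)) ^ (5 : ℕ) = z := by
  rw [← Real.rpow_natCast (z ^ ((1:ℝ)/5)) 5, ← Real.rpow_mul hz]
  norm_num

lemma log_bound {L l2 lx : ℝ} (hL : L * l2 ≤ (1/5) * (l2 + lx)) (hlx : 4 ≤ lx)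
    (hl2 : (0.6931471803:ℝ) < l2) : L + 1 ≤ lx := by
  have hl2' : (0:ℝ) ≤ 5 * l2 - 1 := by linarith
  nlinarith [mul_nonneg (sub_nonneg.mpr hlx) hl2']

theorem short_sum_lam5_conv_one_le :
    ∃ C > (0 : ℝ), ∀ x y : ℝ, Real.exp 4 ≤ x → 1 ≤ y → y ≤ x →
      ∑ n ∈ Finset.Ioc ⌊x⌋₊ ⌊x + y⌋₊, ∑ d ∈ n.divisors, lam5 d ≤
        C * ((Mxy x y : ℝ) * Real.log x + y * x ^ (-(1 : ℝ) / 2) +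
          x ^ (-(1 : ℝ) / 5) * y ^ ((2 : ℝ) / 5)) := by
  classical
  refine ⟨10, by norm_num, ?_⟩
  intro x y hx hy1 hyx
  have hexp4 : (16 : ℝ) ≤ Real.exp 4 := by
    have h4 : Real.exp 4 = Real.exp 1 ^ (4 : ℕ) := by
      rw [← Real.exp_nat_mul]; norm_num
    rw [h4]
    have he : (2.7:ℝ) < Real.exp 1 := by nlinarith [Real.exp_one_gt_d9]
    nlinarith [pow_lt_pow_left₀ he (by norm_num : (0:ℝ) ≤ 2.7) (by norm_num : 4 ≠ 0)]
  have hx0 : (0 : ℝ) < x := by linarith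
  have hx16 : (16 : ℝ) ≤ x := by linarith
  have hy0 : (0 : ℝ) < y := by linarith
  have hxy0 : (0 : ℝ) ≤ x + y := by linarith
  have hlogx : (4 : ℝ) ≤ Real.log x := by
    rw [← Real.log_exp 4]
    exact Real.log_le_log (Real.exp_pos 4) hx
  -- notation
  set W : ℕ := ⌊(2 * x) ^ ((1 : ℝ) / 5)⌋₊ with hWdef
  set T : ℝ := (16 * y ^ 2 / x) ^ ((1 : ℝ) / 5) with hTdef
  set w0 : ℕ := ⌊T⌋₊ + 1 with hw0def
  have hT0 : 0 ≤ T := Real.rpow_nonneg (by positivity) _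
  have hTw0 : T < (w0 : ℕ) := by
    push_cast
    simpa [hw0def] using Nat.lt_floor_add_one T
  have hw0pos : 0 < w0 := by omega
  have hrpow0 : (0:ℝ) ≤ (2 * x) ^ ((1 : ℝ) / 5) := Real.rpow_nonneg (by positivity) _
  set Aset : ℕ → Finset ℕ := fun w => (Finset.Icc 1 ⌊x + y⌋₊).filter
      (fun s => x < (s : ℝ) ^ 2 * (w : ℝ) ^ 5 ∧ (s : ℝ) ^ 2 * (w : ℝ) ^ 5 ≤ x + y) with hAdef
  have hmemA : ∀ w s : ℕ, s ∈ Aset w ↔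
      (1 ≤ s ∧ s ≤ ⌊x + y⌋₊) ∧ x < (s : ℝ) ^ 2 * (w : ℝ) ^ 5 ∧ (s : ℝ) ^ 2 * (w : ℝ) ^ 5 ≤ x + y := by
    intro w s
    rw [hAdef]
    simp [Finset.mem_filter, Finset.mem_Icc]
  -- step 1
  have step1 : (∑ n ∈ Finset.Ioc ⌊x⌋₊ ⌊x + y⌋₊, ∑ d ∈ n.divisors, lam5 d)
      ≤ (((Finset.Ioc ⌊x⌋₊ ⌊x + y⌋₊).filter HasRep).card : ℝ) := by
    calc (∑ n ∈ Finset.Ioc ⌊x⌋₊ ⌊x + y⌋₊, ∑ d ∈ n.divisors, lam5 d)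
        ≤ ∑ n ∈ Finset.Ioc ⌊x⌋₊ ⌊x + y⌋₊, (if HasRep n then (1 : ℝ) else 0) := by
          refine Finset.sum_le_sum fun n hn => ?_
          have h1 := (Finset.mem_Ioc.mp hn).1
          exact key_partA n (by omega)
      _ = _ := by rw [Finset.sum_boole]
  -- step 2
  have step2 : (((Finset.Ioc ⌊x⌋₊ ⌊x + y⌋₊).filter HasRep).card : ℕ)
      ≤ ∑ w ∈ Finset.Icc 1 W, (Aset w).card := by
    have hsub : (Finset.Ioc ⌊x⌋₊ ⌊x + y⌋₊).filter HasRep ⊆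
        (Finset.Icc 1 W).biUnion fun w => (Aset w).image fun s => s ^ 2 * w ^ 5 := by
      intro n hn
      rw [Finset.mem_filter] at hn
      obtain ⟨hnI, s, w, hs, hw, rfl⟩ := hn
      rw [Finset.mem_Ioc] at hnI
      obtain ⟨hn1, hn2⟩ := hnI
      have hcast : ((s ^ 2 * w ^ 5 : ℕ) : ℝ) = (s : ℝ) ^ 2 * (w : ℝ) ^ 5 := by push_cast; ring
      have hnR1 : x < (s : ℝ) ^ 2 * (w : ℝ) ^ 5 := by
        have hfl : (⌊x⌋₊ : ℝ) + 1 ≤ ((s ^ 2 * w ^ 5 : ℕ) : ℝ) := by exact_mod_cast hn1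
        have := Nat.lt_floor_add_one x
        rw [hcast] at hfl
        linarith
      have hnR2 : (s : ℝ) ^ 2 * (w : ℝ) ^ 5 ≤ x + y := by
        have hfl : ((s ^ 2 * w ^ 5 : ℕ) : ℝ) ≤ (⌊x + y⌋₊ : ℝ) := by exact_mod_cast hn2
        have := Nat.floor_le hxy0
        rw [hcast] at hfl
        linarith
      have hs1 : (1 : ℝ) ≤ (s : ℝ) := by exact_mod_cast hs
      have hw1 : (1 : ℝ) ≤ (w : ℝ) := by exact_mod_cast hw
      have hwW : w ≤ W := by
        apply Nat.le_floor
        apply le_rpow_fifth (by positivity)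
        have hsq : (1 : ℝ) ≤ (s : ℝ) ^ 2 := by nlinarith
        have hw5 : (0 : ℝ) ≤ (w : ℝ) ^ 5 := by positivity
        nlinarith [mul_le_mul_of_nonneg_right hsq hw5]
      rw [Finset.mem_biUnion]
      refine ⟨w, Finset.mem_Icc.mpr ⟨hw, hwW⟩, Finset.mem_image.mpr ⟨s, ?_, rfl⟩⟩
      rw [hmemA]
      refine ⟨⟨hs, Nat.le_floor ?_⟩, hnR1, hnR2⟩
      have hw5ge : (1 : ℝ) ≤ (w : ℝ) ^ 5 := by
        calc (1:ℝ) = 1 ^ 5 := by norm_num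
          _ ≤ (w : ℝ) ^ 5 := by gcongr <;> norm_num
      have h1 : (s:ℝ) ≤ (s:ℝ)^2 := by nlinarith
      have h2 : (s:ℝ)^2 ≤ (s:ℝ)^2 * (w:ℝ)^5 := by
        nlinarith [mul_le_mul_of_nonneg_left hw5ge (by positivity : (0:ℝ) ≤ (s:ℝ)^2)]
      linarith
    calc (((Finset.Ioc ⌊x⌋₊ ⌊x + y⌋₊).filter HasRep).card : ℕ)
        ≤ ((Finset.Icc 1 W).biUnion fun w => (Aset w).image fun s => s ^ 2 * w ^ 5).card :=
          Finset.card_le_card hsub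
      _ ≤ ∑ w ∈ Finset.Icc 1 W, ((Aset w).image fun s => s ^ 2 * w ^ 5).card :=
          Finset.card_biUnion_le
      _ ≤ ∑ w ∈ Finset.Icc 1 W, (Aset w).card :=
          Finset.sum_le_sum fun w _ => Finset.card_image_le
  -- interval bounds for elements of Aset
  have hbound : ∀ w : ℕ, 1 ≤ w → ∀ s ∈ Aset w,
      Real.sqrt (x / (w : ℝ) ^ 5) < (s : ℝ) ∧ (s : ℝ) ≤ Real.sqrt ((x + y) / (w : ℝ) ^ 5) := by
    intro w hw s hsA
    rw [hmemA] at hsA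
    obtain ⟨⟨hs1, _⟩, hlo, hhi⟩ := hsA
    have hw1 : (1 : ℝ) ≤ (w : ℝ) := by exact_mod_cast hw
    have hw5 : (0 : ℝ) < (w : ℝ) ^ 5 := by positivity
    have hs0 : (0 : ℝ) < (s : ℝ) := by exact_mod_cast hs1
    constructor
    · rw [Real.sqrt_lt' hs0, div_lt_iff₀ hw5]
      linarith
    · rw [Real.le_sqrt hs0.le (by positivity), le_div_iff₀ hw5]
      linarith
  have hgap : ∀ w : ℕ, 1 ≤ w →
      Real.sqrt ((x + y) / (w : ℝ) ^ 5) - Real.sqrt (x / (w : ℝ) ^ 5)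
        ≤ y / (2 * Real.sqrt ((w : ℝ) ^ 5 * x)) := by
    intro w hw
    have hw1 : (1 : ℝ) ≤ (w : ℝ) := by exact_mod_cast hw
    exact sqrt_gap hx0 hy0.le (by positivity)
  have hab : ∀ w : ℕ, Real.sqrt (x / (w : ℝ) ^ 5) ≤ Real.sqrt ((x + y) / (w : ℝ) ^ 5) := by
    intro w
    apply Real.sqrt_le_sqrt
    rcases Nat.eq_zero_or_pos w with rfl | hw
    · norm_num
    · have hw5 : (0 : ℝ) < (w : ℝ) ^ 5 := by
        have : (1:ℝ) ≤ (w:ℝ) := by exact_mod_cast hw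
        positivity
      gcongr
      linarith
  -- small w card bound
  have hsqx : (0:ℝ) < Real.sqrt x := Real.sqrt_pos.mpr hx0
  have hcard_small : ∀ w : ℕ, 1 ≤ w →
      ((Aset w).card : ℝ) ≤ y / (2 * Real.sqrt x) * ((w:ℝ)^2)⁻¹ + 1 := by
    intro w hw
    have hw1 : (1:ℝ) ≤ (w:ℝ) := by exact_mod_cast hw
    have hw5 : (0:ℝ) < (w:ℝ)^5 := by positivity
    have hc := card_le_of_interval (Real.sqrt_nonneg _) (Real.sqrt_nonneg _) (hab w)
      (Aset w) (hbound w hw)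
    have hg := hgap w hw
    have hsq : (w:ℝ)^2 * Real.sqrt x ≤ Real.sqrt ((w:ℝ)^5 * x) := by
      have h4 : Real.sqrt ((w:ℝ)^4 * x) = (w:ℝ)^2 * Real.sqrt x := by
        rw [Real.sqrt_mul (by positivity), show ((w:ℝ)^4) = ((w:ℝ)^2)^2 by ring,
          Real.sqrt_sq (by positivity)]
      rw [← h4]
      apply Real.sqrt_le_sqrt
      have h45 : (w:ℝ)^4 ≤ (w:ℝ)^5 := by
        calc (w:ℝ)^4 = (w:ℝ)^4 * 1 := by ring
          _ ≤ (w:ℝ)^4 * (w:ℝ) := by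
              have h40 : (0:ℝ) ≤ (w:ℝ)^4 := by positivity
              nlinarith
          _ = (w:ℝ)^5 := by ring
      nlinarith [mul_le_mul_of_nonneg_right h45 hx0.le]
    have hwr : (0:ℝ) < (w:ℝ) := by linarith
    have hp1 : (0:ℝ) < 2 * Real.sqrt ((w:ℝ)^5 * x) := by
      have := Real.sqrt_pos.mpr (mul_pos (pow_pos hwr 5) hx0)
      linarith
    have hp2 : (0:ℝ) < 2 * ((w:ℝ)^2 * Real.sqrt x) := by
      have := pow_pos hwr 2
      nlinarith
    have h2 : y / (2 * Real.sqrt ((w:ℝ)^5 * x)) ≤ y / (2 * ((w:ℝ)^2 * Real.sqrt x)) := by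
      rw [div_le_div_iff₀ hp1 hp2]
      nlinarith [mul_le_mul_of_nonneg_left hsq hy0.le]
    have heq : y / (2 * ((w:ℝ)^2 * Real.sqrt x)) = y / (2 * Real.sqrt x) * ((w:ℝ)^2)⁻¹ := by
      rw [show (2 * ((w:ℝ)^2 * Real.sqrt x)) = (2 * Real.sqrt x) * ((w:ℝ)^2) by ring,
        ← div_div, div_eq_mul_inv]
    rw [heq] at h2
    linarith
  set smallF := (Finset.Icc 1 W).filter (fun w => w < w0) with hsmallF
  set largeF := (Finset.Icc 1 W).filter (fun w => ¬ w < w0) with hlargeF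
  have hsplit : ∑ w ∈ Finset.Icc 1 W, ((Aset w).card:ℝ)
      = ∑ w ∈ smallF, ((Aset w).card:ℝ) + ∑ w ∈ largeF, ((Aset w).card:ℝ) :=
    (Finset.sum_filter_add_sum_filter_not _ _ _).symm
  have hsmall : ∑ w ∈ smallF, ((Aset w).card:ℝ) ≤ y / Real.sqrt x + T := by
    have hcardT : (smallF.card : ℝ) ≤ T := by
      have hsub : smallF ⊆ Finset.Icc 1 ⌊T⌋₊ := by
        intro w hw
        rw [hsmallF, Finset.mem_filter, Finset.mem_Icc] at hw
        exact Finset.mem_Icc.mpr ⟨hw.1.1, by omega⟩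
      have h1 := Finset.card_le_card hsub
      rw [Nat.card_Icc] at h1
      have h2 : smallF.card ≤ ⌊T⌋₊ := by omega
      exact le_trans (by exact_mod_cast h2) (Nat.floor_le hT0)
    calc ∑ w ∈ smallF, ((Aset w).card:ℝ)
        ≤ ∑ w ∈ smallF, (y / (2*Real.sqrt x) * ((w:ℝ)^2)⁻¹ + 1) := by
          refine Finset.sum_le_sum fun w hw => ?_
          rw [hsmallF, Finset.mem_filter, Finset.mem_Icc] at hw
          exact hcard_small w hw.1.1
      _ = (∑ w ∈ smallF, y/(2*Real.sqrt x) * ((w:ℝ)^2)⁻¹) + smallF.card := by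
          rw [Finset.sum_add_distrib, Finset.sum_const, nsmul_eq_mul, mul_one]
      _ ≤ (∑ w ∈ Finset.Icc 1 W, y/(2*Real.sqrt x) * ((w:ℝ)^2)⁻¹) + smallF.card := by
          have := Finset.sum_le_sum_of_subset_of_nonneg
            (Finset.filter_subset (fun w => w < w0) (Finset.Icc 1 W))
            (fun w _ _ => by positivity :
              ∀ w ∈ Finset.Icc 1 W, w ∉ smallF → (0:ℝ) ≤ y/(2*Real.sqrt x) * ((w:ℝ)^2)⁻¹)
          exact add_le_add_left this _
      _ = y/(2*Real.sqrt x) * (∑ w ∈ Finset.Icc 1 W, ((w:ℝ)^2)⁻¹) + smallF.card := by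
          rw [← Finset.mul_sum]
      _ ≤ y/(2*Real.sqrt x) * 2 + T := by
          have h2 := sum_inv_sq_le W
          have h3 : (0:ℝ) ≤ y/(2*Real.sqrt x) := by positivity
          nlinarith
      _ ≤ y / Real.sqrt x + T := by
          have : y/(2*Real.sqrt x)*2 = y/Real.sqrt x := by
            field_simp
          linarith
  -- large w
  have hT5 : T ^ (5:ℕ) = 16*y^2/x := rpow_fifth_pow (by positivity)
  have hδsmall : ∀ w : ℕ, w0 ≤ w → y / (2*Real.sqrt ((w:ℝ)^5*x)) < 1/8 := by
    intro w hw0w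
    have hwr : (0:ℝ) < (w:ℝ) := by
      have : (0:ℕ) < w := lt_of_lt_of_le hw0pos hw0w
      exact_mod_cast this
    have hTw : T < (w:ℝ) := lt_of_lt_of_le hTw0 (by exact_mod_cast hw0w)
    have h5 : 16*y^2/x < (w:ℝ)^5 := by
      rw [← hT5]
      exact pow_lt_pow_left₀ hTw hT0 (by norm_num)
    have h6 : 16*y^2 < (w:ℝ)^5 * x := by
      rw [div_lt_iff₀ hx0] at h5
      linarith
    have h7 : 4*y < Real.sqrt ((w:ℝ)^5 * x) := by
      have hsq : ((4:ℝ)*y)^2 < (w:ℝ)^5*x := by nlinarith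
      exact ((Real.lt_sqrt (by linarith)).mpr hsq)
    have hp1 : (0:ℝ) < 2 * Real.sqrt ((w:ℝ)^5 * x) := by
      have := Real.sqrt_pos.mpr (mul_pos (pow_pos hwr 5) hx0)
      linarith
    rw [div_lt_iff₀ hp1]
    nlinarith
  have hcard_large1 : ∀ w : ℕ, w0 ≤ w → (Aset w).card ≤ 1 := by
    intro w hww
    have hwn1 : 1 ≤ w := le_trans hw0pos hww
    rw [Finset.card_le_one]
    intro s1 h1 s2 h2
    obtain ⟨ha1, hb1⟩ := hbound w hwn1 s1 h1
    obtain ⟨ha2, hb2⟩ := hbound w hwn1 s2 h2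
    have hg := hgap w hwn1
    have hδ := hδsmall w hww
    have hn1 : s1 < s2 + 1 := by
      have : (s1:ℝ) < (s2:ℝ) + 1 := by linarith
      exact_mod_cast this
    have hn2 : s2 < s1 + 1 := by
      have : (s2:ℝ) < (s1:ℝ) + 1 := by linarith
      exact_mod_cast this
    omega
  set Nblk : ℕ → ℕ := fun j => w0 * 2 ^ j with hNblk
  set Rset : ℕ → Finset ℕ := fun j => (Finset.Icc (Nblk j) (2 * Nblk j)).filter
      (fun n : ℕ => |Real.sqrt (x / (n:ℝ) ^ 5) - round (Real.sqrt (x / (n:ℝ) ^ 5))|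
        < y / Real.sqrt ((Nblk j : ℝ) ^ 5 * x)) with hRset
  set Jgood : Finset ℕ := (Finset.range (Nat.log 2 W + 1)).filter
      (fun j => ((Nblk j : ℕ) : ℝ) ≤ (2*x) ^ ((1:ℝ)/5)) with hJgood
  have hNpos : ∀ j, 0 < Nblk j := fun j => Nat.mul_pos hw0pos (pow_pos (by norm_num) j)
  have hRM : ∀ j ∈ Jgood, (Rset j).card ≤ Mxy x y := by
    intro j hj
    rw [hJgood, Finset.mem_filter, Finset.mem_range] at hj
    obtain ⟨hjr, hjle⟩ := hj
    have hmem : Nblk j ∈ (Finset.Icc 1 W).filter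
        (fun N : ℕ => T < (N:ℝ) ∧ (N:ℝ) ≤ (2*x) ^ ((1:ℝ)/5)) := by
      rw [Finset.mem_filter, Finset.mem_Icc]
      refine ⟨⟨hNpos j, Nat.le_floor hjle⟩, ?_, hjle⟩
      have hle : w0 ≤ Nblk j := by
        rw [hNblk]
        exact Nat.le_mul_of_pos_right _ (pow_pos (by norm_num) j)
      calc T < (w0:ℝ) := hTw0
        _ ≤ ((Nblk j : ℕ) : ℝ) := by exact_mod_cast hle
    have hcr : (Rset j).card
        = Rcount (fun t => Real.sqrt (x / t^5)) (Nblk j) (y / Real.sqrt (((Nblk j : ℕ):ℝ)^5 * x)) := by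
      rw [hRset]
      simp only [Rcount]
    rw [hcr]
    simp only [Mxy]
    rw [← hWdef, ← hTdef]
    exact Finset.le_sup (f := fun N : ℕ => Rcount (fun t => Real.sqrt (x / t^5)) N (y / Real.sqrt ((N:ℝ)^5 * x))) hmem
  have hcover : (largeF.filter fun w => (Aset w).Nonempty) ⊆ Jgood.biUnion Rset := by
    intro w hw
    rw [Finset.mem_filter] at hw
    obtain ⟨hwL, s, hsA⟩ := hw
    rw [hlargeF, Finset.mem_filter, Finset.mem_Icc] at hwL
    obtain ⟨⟨hw1, hwW⟩, hw0le'⟩ := hwL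
    have hw0le : w0 ≤ w := Nat.not_lt.mp hw0le'
    set j := Nat.log 2 (w / w0) with hjdef
    have hq1 : 1 ≤ w / w0 := (Nat.one_le_div_iff hw0pos).mpr hw0le
    have hNle : Nblk j ≤ w := by
      rw [hNblk]
      calc w0 * 2 ^ j ≤ w0 * (w / w0) :=
            Nat.mul_le_mul_left _ (Nat.pow_log_le_self 2 (by omega))
        _ ≤ w := by rw [mul_comm]; exact Nat.div_mul_le_self w w0
    have hle2N : w ≤ 2 * Nblk j := by
      have hlt : w / w0 < 2 ^ (j + 1) := Nat.lt_pow_succ_log_self (by norm_num) _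
      have hdm := Nat.div_add_mod w w0
      have hmlt : w % w0 < w0 := Nat.mod_lt _ hw0pos
      have h3 : w0 * (w / w0 + 1) ≤ w0 * 2 ^ (j+1) := Nat.mul_le_mul_left _ hlt
      have h4 : 2 * Nblk j = w0 * 2 ^ (j+1) := by rw [hNblk]; ring
      have h5 : w0 * (w / w0 + 1) = w0 * (w / w0) + w0 := by ring
      omega
    have hjJ : j ≤ Nat.log 2 W := Nat.log_mono_right (le_trans (Nat.div_le_self _ _) hwW)
    have hNreal : ((Nblk j : ℕ) : ℝ) ≤ (2*x) ^ ((1:ℝ)/5) := by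
      calc ((Nblk j : ℕ):ℝ) ≤ (w:ℝ) := by exact_mod_cast hNle
        _ ≤ (W:ℝ) := by exact_mod_cast hwW
        _ ≤ (2*x) ^ ((1:ℝ)/5) := by rw [hWdef]; exact Nat.floor_le hrpow0
    rw [Finset.mem_biUnion]
    refine ⟨j, ?_, ?_⟩
    · rw [hJgood, Finset.mem_filter, Finset.mem_range]
      exact ⟨by omega, hNreal⟩
    · rw [hRset]
      rw [Finset.mem_filter, Finset.mem_Icc]
      refine ⟨⟨hNle, hle2N⟩, ?_⟩
      obtain ⟨haw, hbw⟩ := hbound w hw1 s hsA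
      have hg := hgap w hw1
      have hδ := hδsmall w hw0le
      have hsa : (s:ℝ) - Real.sqrt (x / (w:ℝ)^5) < 1/2 := by linarith
      have hr := round_eq_nat haw hsa
      rw [hr]
      have habs : |Real.sqrt (x/(w:ℝ)^5) - (((s:ℤ)):ℝ)| = (s:ℝ) - Real.sqrt (x/(w:ℝ)^5) := by
        rw [abs_sub_comm, abs_of_nonneg (by push_cast; linarith)]
        push_cast
        ring
      rw [habs]
      have hNR1 : (1:ℝ) ≤ ((Nblk j : ℕ):ℝ) := by exact_mod_cast hNpos j
      have hmono : Real.sqrt (((Nblk j : ℕ):ℝ)^5 * x) ≤ Real.sqrt ((w:ℝ)^5 * x) := by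
        apply Real.sqrt_le_sqrt
        have : ((Nblk j : ℕ):ℝ) ≤ (w:ℝ) := by exact_mod_cast hNle
        gcongr
      have hwr : (0:ℝ) < (w:ℝ) := by
        have : (0:ℕ) < w := hw1
        exact_mod_cast this
      have hNS : (0:ℝ) < Real.sqrt (((Nblk j : ℕ):ℝ)^5 * x) :=
        Real.sqrt_pos.mpr (mul_pos (pow_pos (by linarith) 5) hx0)
      have hwS : (0:ℝ) < Real.sqrt (((w:ℕ):ℝ)^5 * x) :=
        Real.sqrt_pos.mpr (mul_pos (pow_pos hwr 5) hx0)
      have hfin1 : y / (2*Real.sqrt ((w:ℝ)^5*x)) ≤ y / (2*Real.sqrt (((Nblk j:ℕ):ℝ)^5*x)) := by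
        rw [div_le_div_iff₀ (by linarith) (by linarith)]
        nlinarith [mul_le_mul_of_nonneg_left hmono hy0.le]
      have hfin2 : y / (2*Real.sqrt (((Nblk j:ℕ):ℝ)^5*x)) < y / Real.sqrt (((Nblk j:ℕ):ℝ)^5*x) := by
        rw [div_lt_div_iff₀ (by linarith) hNS]
        nlinarith
      linarith
  have hlargesum : ∑ w ∈ largeF, (Aset w).card ≤ (Nat.log 2 W + 1) * Mxy x y := by
    calc ∑ w ∈ largeF, (Aset w).card
        ≤ ∑ w ∈ largeF, (if (Aset w).Nonempty then 1 else 0) := by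
          refine Finset.sum_le_sum fun w hw => ?_
          rw [hlargeF, Finset.mem_filter] at hw
          by_cases hne : (Aset w).Nonempty
          · rw [if_pos hne]
            exact hcard_large1 w (Nat.not_lt.mp hw.2)
          · rw [if_neg hne, Finset.not_nonempty_iff_eq_empty.mp hne]
            simp
      _ = (largeF.filter fun w => (Aset w).Nonempty).card := (Finset.card_filter _ _).symm
      _ ≤ (Jgood.biUnion Rset).card := Finset.card_le_card hcover
      _ ≤ ∑ j ∈ Jgood, (Rset j).card := Finset.card_biUnion_le
      _ ≤ ∑ j ∈ Jgood, Mxy x y := Finset.sum_le_sum hRM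
      _ = Jgood.card * Mxy x y := by rw [Finset.sum_const, smul_eq_mul]
      _ ≤ (Nat.log 2 W + 1) * Mxy x y := by
          apply Nat.mul_le_mul_right
          calc Jgood.card ≤ (Finset.range (Nat.log 2 W + 1)).card := by
                rw [hJgood]; exact Finset.card_filter_le _ _
            _ = Nat.log 2 W + 1 := Finset.card_range _
  have hlogW : ((Nat.log 2 W : ℝ) + 1) ≤ Real.log x := by
    have hW1 : 1 ≤ W := by
      apply Nat.le_floor
      apply le_rpow_fifth (by norm_num)
      norm_num
      nlinarith
    have hpow : (2:ℝ) ^ (Nat.log 2 W : ℕ) ≤ (W:ℝ) := by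
      exact_mod_cast Nat.pow_log_le_self 2 (by omega)
    have hWle : (W:ℝ) ≤ (2*x) ^ ((1:ℝ)/5) := by rw [hWdef]; exact Nat.floor_le hrpow0
    have hL : (Nat.log 2 W : ℝ) * Real.log 2 ≤ (1/5) * Real.log (2*x) := by
      have h1 : Real.log ((2:ℝ) ^ (Nat.log 2 W : ℕ)) ≤ Real.log ((2*x) ^ ((1:ℝ)/5)) :=
        Real.log_le_log (by positivity) (le_trans hpow hWle)
      rw [Real.log_pow, Real.log_rpow (by positivity)] at h1
      push_cast at h1
      linarith
    have hlog2x : Real.log (2*x) = Real.log 2 + Real.log x :=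
      Real.log_mul (by norm_num) (by positivity)
    rw [hlog2x] at hL
    exact log_bound hL hlogx Real.log_two_gt_d9
  -- rpow rewrites
  have hT2 : T ≤ 2 * (x ^ (-(1:ℝ)/5) * y ^ ((2:ℝ)/5)) := by
    rw [hTdef, show (16 * y^2 / x) = 16 * (y^2 * x⁻¹) by ring,
      Real.mul_rpow (by norm_num) (by positivity),
      Real.mul_rpow (by positivity) (by positivity)]
    have h16 : (16:ℝ) ^ ((1:ℝ)/5) ≤ 2 := by
      calc (16:ℝ)^((1:ℝ)/5) ≤ (32:ℝ)^((1:ℝ)/5) :=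
            Real.rpow_le_rpow (by norm_num) (by norm_num) (by norm_num)
        _ = 2 := by
          rw [show (32:ℝ) = 2^(5:ℕ) by norm_num, ← Real.rpow_natCast 2 5,
            ← Real.rpow_mul (by norm_num)]
          norm_num
    have hy25 : (y^2) ^ ((1:ℝ)/5) = y ^ ((2:ℝ)/5) := by
      rw [← Real.rpow_natCast y 2, ← Real.rpow_mul hy0.le]
      norm_num
    have hxm : (x⁻¹) ^ ((1:ℝ)/5) = x ^ (-(1:ℝ)/5) := by
      rw [← Real.rpow_neg_one, ← Real.rpow_mul hx0.le]
      norm_num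
    rw [hy25, hxm]
    have hy25n : (0:ℝ) ≤ y^((2:ℝ)/5) := Real.rpow_nonneg hy0.le _
    have hxmn : (0:ℝ) ≤ x^(-(1:ℝ)/5) := Real.rpow_nonneg hx0.le _
    calc (16:ℝ)^((1:ℝ)/5) * (y^((2:ℝ)/5) * x^(-(1:ℝ)/5))
        ≤ 2 * (y^((2:ℝ)/5) * x^(-(1:ℝ)/5)) :=
          mul_le_mul_of_nonneg_right h16 (mul_nonneg hy25n hxmn)
      _ = 2 * (x ^ (-(1:ℝ)/5) * y ^ ((2:ℝ)/5)) := by ring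
  have hyx2 : y / Real.sqrt x = y * x ^ (-(1:ℝ)/2) := by
    rw [Real.sqrt_eq_rpow, show (-(1:ℝ)/2) = -(1/2:ℝ) by norm_num,
      Real.rpow_neg hx0.le, div_eq_mul_inv]
  -- final assembly
  have hM0 : (0:ℝ) ≤ (Mxy x y : ℝ) := by positivity
  have ht10 : (0:ℝ) ≤ y * x ^ (-(1:ℝ)/2) := by positivity
  have ht20 : (0:ℝ) ≤ x ^ (-(1:ℝ)/5) * y ^ ((2:ℝ)/5) := by positivity
  have hlarge_real : ∑ w ∈ largeF, ((Aset w).card:ℝ) ≤ Real.log x * (Mxy x y : ℝ) := by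
    have h1 : (∑ w ∈ largeF, ((Aset w).card:ℝ)) = ((∑ w ∈ largeF, (Aset w).card : ℕ) : ℝ) := by
      push_cast
      rfl
    rw [h1]
    calc ((∑ w ∈ largeF, (Aset w).card : ℕ) : ℝ)
        ≤ (((Nat.log 2 W + 1) * Mxy x y : ℕ) : ℝ) := by exact_mod_cast hlargesum
      _ = ((Nat.log 2 W : ℝ) + 1) * (Mxy x y : ℝ) := by push_cast; ring
      _ ≤ Real.log x * (Mxy x y : ℝ) := mul_le_mul_of_nonneg_right hlogW hM0
  calc ∑ n ∈ Finset.Ioc ⌊x⌋₊ ⌊x + y⌋₊, ∑ d ∈ n.divisors, lam5 d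
      ≤ (((Finset.Ioc ⌊x⌋₊ ⌊x + y⌋₊).filter HasRep).card : ℝ) := step1
    _ ≤ ∑ w ∈ Finset.Icc 1 W, ((Aset w).card:ℝ) := by
        calc (((Finset.Ioc ⌊x⌋₊ ⌊x + y⌋₊).filter HasRep).card : ℝ)
            ≤ ((∑ w ∈ Finset.Icc 1 W, (Aset w).card : ℕ) : ℝ) := by exact_mod_cast step2
          _ = _ := by push_cast; rfl
    _ = ∑ w ∈ smallF, ((Aset w).card:ℝ) + ∑ w ∈ largeF, ((Aset w).card:ℝ) := hsplit
    _ ≤ (y / Real.sqrt x + T) + Real.log x * (Mxy x y : ℝ) := by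
        linarith [hsmall, hlarge_real]
    _ ≤ 10 * ((Mxy x y : ℝ) * Real.log x + y * x ^ (-(1 : ℝ) / 2) +
          x ^ (-(1 : ℝ) / 5) * y ^ ((2 : ℝ) / 5)) := by
        have hMl : (0:ℝ) ≤ (Mxy x y : ℝ) * Real.log x := mul_nonneg hM0 (by linarith)
        rw [hyx2]
        linarith [hT2, hMl, ht10, ht20, mul_comm (Real.log x) ((Mxy x y : ℝ))]
end
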